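/- A bipartite Hermitian operator X on C^d ⊗ C^d is k-block-positive if and only if the operator X_k = |φ_k⟩⟨φ_k| ⊗ X on C^{kd} ⊗ C^{kd} is 1-block-positive, i.e. ⟨u ⊗ v| X_k |u ⊗ v⟩ ≥ 0 for all product vectors u, v ∈ C^{kd}. -/
import Mathlib


open scoped ComplexOrder Matrix

/-- `ψ` has Schmidt rank at most `k`. -/
def SchmidtRankLE (d k : ℕ) (ψ : Fin d × Fin d → ℂ) : Prop :=
  ∃ z w : Fin k → Fin d → ℂ, ψ = fun x => ∑ p, z p x.1 * w p x.2

/-- The normalized maximally entangled vector `φ_k` on `ℂ^k ⊗ ℂ^k`. -/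
noncomputable def phiME (k : ℕ) : Fin k × Fin k → ℂ :=
  fun ij => if ij.1 = ij.2 then ((1 / Real.sqrt k : ℝ) : ℂ) else 0

/-- The operator `X_k = |φ_k⟩⟨φ_k| ⊗ X` on `(ℂ^k ⊗ ℂ^d) ⊗ (ℂ^k ⊗ ℂ^d) ≅ ℂ^{kd} ⊗ ℂ^{kd}`,
with the `ℂ^k` factors paired against `|φ_k⟩⟨φ_k|` and the `ℂ^d` factors against `X`. -/
noncomputable def Xk (d k : ℕ) (X : Matrix (Fin d × Fin d) (Fin d × Fin d) ℂ) :
    Matrix ((Fin k × Fin d) × (Fin k × Fin d)) ((Fin k × Fin d) × (Fin k × Fin d)) ℂ :=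
  fun r c => phiME k (r.1.1, r.2.1) * star (phiME k (c.1.1, c.2.1)) *
    X (r.1.2, r.2.2) (c.1.2, c.2.2)

set_option maxHeartbeats 1000000 in
lemma key_quadratic (d k : ℕ) (X : Matrix (Fin d × Fin d) (Fin d × Fin d) ℂ)
    (u v : Fin k × Fin d → ℂ) :
    star (fun r : (Fin k × Fin d) × (Fin k × Fin d) => u r.1 * v r.2) ⬝ᵥ
      (Xk d k X *ᵥ fun r => u r.1 * v r.2)
    = (((1 / Real.sqrt k : ℝ) : ℂ))^2 *
      (star (fun x : Fin d × Fin d => ∑ a, u (a, x.1) * v (a, x.2)) ⬝ᵥ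
        (X *ᵥ fun x => ∑ a, u (a, x.1) * v (a, x.2))) := by
  simp only [dotProduct, Matrix.mulVec, Xk, phiME, Pi.star_apply, apply_ite star, star_zero,
    Complex.star_def, Complex.conj_ofReal, Fintype.sum_prod_type, ite_mul, zero_mul,
    mul_ite, mul_zero, Finset.sum_ite_irrel, Finset.sum_const_zero,
    Finset.sum_ite_eq, Finset.sum_ite_eq', Finset.mem_univ, if_true,
    Finset.mul_sum, Finset.sum_mul, map_sum, map_mul]
  conv_rhs => enter [2,a,2,b,2,c,2,e]; rw [Finset.sum_comm]
  conv_rhs => enter [2,a,2,b,2,c]; rw [Finset.sum_comm]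
  conv_rhs => enter [2,a,2,b]; rw [Finset.sum_comm]
  conv_rhs => enter [2,a]; rw [Finset.sum_comm]
  conv_rhs => rw [Finset.sum_comm]
  conv_rhs => enter [2,a,2,b,2,c,2,e]; rw [Finset.sum_comm]
  conv_rhs => enter [2,a,2,b,2,c]; rw [Finset.sum_comm]
  refine Finset.sum_congr rfl fun p1 _ => Finset.sum_congr rfl fun p2 _ =>
    Finset.sum_congr rfl fun p3 _ => Finset.sum_congr rfl fun p4 _ =>
    Finset.sum_congr rfl fun p5 _ => Finset.sum_congr rfl fun p6 _ => ?_
  ring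

lemma aux_pos_mul (t : ℝ) (ht : 0 < t) (Q : ℂ) : 0 ≤ (t : ℂ) * Q ↔ 0 ≤ Q := by
  rw [Complex.le_def, Complex.le_def]
  simp only [Complex.mul_re, Complex.mul_im, Complex.ofReal_re, Complex.ofReal_im,
    Complex.zero_re, Complex.zero_im, zero_mul, sub_zero, add_zero]
  constructor
  · rintro ⟨h1, h2⟩
    refine ⟨nonneg_of_mul_nonneg_right ?_ ht, ?_⟩
    · linarith [h1]
    · have := (mul_eq_zero.mp h2.symm).resolve_left (ne_of_gt ht)
      exact this.symm
  · rintro ⟨h1, h2⟩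
    exact ⟨mul_nonneg ht.le h1, by rw [← h2, mul_zero]⟩

/-- `X` is `k`-block-positive iff `X_k = |φ_k⟩⟨φ_k| ⊗ X` is `1`-block-positive, i.e.
`⟨u⊗v| X_k |u⊗v⟩ ≥ 0` for all product vectors `u, v ∈ ℂ^{kd}`. -/
theorem stmt2 (d k : ℕ) (hk : 0 < k)
    (X : Matrix (Fin d × Fin d) (Fin d × Fin d) ℂ) (hX : X.IsHermitian) :
    (∀ ψ : Fin d × Fin d → ℂ, SchmidtRankLE d k ψ → 0 ≤ star ψ ⬝ᵥ (X *ᵥ ψ)) ↔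
    (∀ u v : Fin k × Fin d → ℂ,
      0 ≤ star (fun r : (Fin k × Fin d) × (Fin k × Fin d) => u r.1 * v r.2) ⬝ᵥ
        (Xk d k X *ᵥ fun r => u r.1 * v r.2)) := by
  have ht : (0:ℝ) < ((1 / Real.sqrt k : ℝ))^2 := by
    have : (0:ℝ) < Real.sqrt k := Real.sqrt_pos.2 (by exact_mod_cast hk)
    positivity
  constructor
  · intro h u v
    rw [key_quadratic, ← Complex.ofReal_pow, aux_pos_mul _ ht]
    exact h _ ⟨fun a x => u (a, x), fun a y => v (a, y), rfl⟩
  · intro h ψ hψ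
    obtain ⟨z, w, rfl⟩ := hψ
    have h2 : 0 ≤ star (fun r : (Fin k × Fin d) × (Fin k × Fin d) =>
        (fun p : Fin k × Fin d => z p.1 p.2) r.1 * (fun p : Fin k × Fin d => w p.1 p.2) r.2) ⬝ᵥ
        (Xk d k X *ᵥ fun r =>
          (fun p : Fin k × Fin d => z p.1 p.2) r.1 * (fun p : Fin k × Fin d => w p.1 p.2) r.2) :=
      h (fun p => z p.1 p.2) (fun p => w p.1 p.2)
    rw [key_quadratic d k X (fun p => z p.1 p.2) (fun p => w p.1 p.2),
      ← Complex.ofReal_pow, aux_pos_mul _ ht] at h2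
    exact h2
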